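/- Let F be a real 3×3 matrix with det F > 0, let Cᵢ be a symmetric positive definite real 3×3 matrix with det Cᵢ = 1, and let c₁₀, c₀₁ ∈ ℝ. Define C := Fᵀ·F, C̄ := (det C)^{-1/3}·C, the elastic left Cauchy–Green tensor B_e := F·Cᵢ⁻¹·Fᵀ, B̄_e := (det B_e)^{-1/3}·B_e, and the second Piola–Kirchhoff stress T̃ := C⁻¹·(c₁₀·C̄·Cᵢ⁻¹ − c₀₁·Cᵢ·C̄⁻¹)^D. Then the push-forward of T̃ equals the Eulerian Mooney–Rivlin Kirchhoff stress: F·T̃·Fᵀ = c₁₀·(B̄_e)^D − c₀₁·(B̄_e⁻¹)^D. Hence the Lagrangian and Eulerian stress formulas of the multiplicative Maxwell fluid coincide. -/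

import Mathlib

open Matrix

abbrev Mat := Matrix (Fin 3) (Fin 3) ℝ

/-- The unimodular part of a matrix. -/
noncomputable def unimod (M : Mat) : Mat := (M.det ^ (-(1 : ℝ) / 3)) • M

/-- The deviatoric part of a matrix. -/
noncomputable def dev (M : Mat) : Mat := M - (M.trace / 3) • (1 : Mat)

/-- the push-forward of the Lagrangian Mooney–Rivlin second
Piola–Kirchhoff stress `T̃ = C⁻¹·(c₁₀·C̄·Cᵢ⁻¹ − c₀₁·Cᵢ·C̄⁻¹)^D` equals the Eulerian
Kirchhoff stress: `F·T̃·Fᵀ = c₁₀·(B̄ₑ)^D − c₀₁·(B̄ₑ⁻¹)^D`, where `C = Fᵀ·F` and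
`Bₑ = F·Cᵢ⁻¹·Fᵀ`. -/
theorem lagrangian_eulerian_stress_coincide (F : Mat) (hF : 0 < F.det)
    (Ci : Mat) (hCi : Ci.PosDef) (h1 : Ci.det = 1) (c10 c01 : ℝ) :
    F * ((Fᵀ * F)⁻¹ *
        dev (c10 • (unimod (Fᵀ * F) * Ci⁻¹) - c01 • (Ci * (unimod (Fᵀ * F))⁻¹))) * Fᵀ =
      c10 • dev (unimod (F * Ci⁻¹ * Fᵀ)) - c01 • dev ((unimod (F * Ci⁻¹ * Fᵀ))⁻¹) := by
  have hFdet : IsUnit F.det := isUnit_iff_ne_zero.mpr hF.ne'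
  have hFTdet : IsUnit Fᵀ.det := by rwa [det_transpose]
  have hCidet : IsUnit Ci.det := by rw [h1]; exact isUnit_one
  have hFF : F * F⁻¹ = 1 := mul_nonsing_inv F hFdet
  have hFiF : F⁻¹ * F = 1 := nonsing_inv_mul F hFdet
  have hFT : Fᵀ * Fᵀ⁻¹ = 1 := mul_nonsing_inv _ hFTdet
  have hFTi : Fᵀ⁻¹ * Fᵀ = 1 := nonsing_inv_mul _ hFTdet
  have hCiCi : Ci⁻¹ * Ci = 1 := nonsing_inv_mul _ hCidet
  set s : ℝ := (F.det ^ 2) ^ (-(1:ℝ)/3) with hs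
  have hspos : 0 < s := Real.rpow_pos_of_pos (by positivity) _
  have hsne : s ≠ 0 := hspos.ne'
  have hCdet : (Fᵀ * F).det = F.det ^ 2 := by rw [det_mul, det_transpose, sq]
  have hBdet : (F * Ci⁻¹ * Fᵀ).det = F.det ^ 2 := by
    rw [det_mul, det_mul, det_transpose, det_nonsing_inv, h1, Ring.inverse_one]
    ring
  have huC : unimod (Fᵀ * F) = s • (Fᵀ * F) := by rw [unimod, hCdet]
  have huB : unimod (F * Ci⁻¹ * Fᵀ) = s • (F * Ci⁻¹ * Fᵀ) := by rw [unimod, hBdet]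
  -- inverse of C
  have hCinv : (Fᵀ * F)⁻¹ = F⁻¹ * Fᵀ⁻¹ := by
    apply inv_eq_right_inv
    calc Fᵀ * F * (F⁻¹ * Fᵀ⁻¹) = Fᵀ * (F * F⁻¹) * Fᵀ⁻¹ := by noncomm_ring
      _ = 1 := by rw [hFF, mul_one, hFT]
  -- inverse of unimod C
  have huCinv : (unimod (Fᵀ * F))⁻¹ = s⁻¹ • (F⁻¹ * Fᵀ⁻¹) := by
    rw [huC]; apply inv_eq_right_inv
    rw [smul_mul_assoc, mul_smul_comm, smul_smul, mul_inv_cancel₀ hsne, one_smul]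
    calc Fᵀ * F * (F⁻¹ * Fᵀ⁻¹) = Fᵀ * (F * F⁻¹) * Fᵀ⁻¹ := by noncomm_ring
      _ = 1 := by rw [hFF, mul_one, hFT]
  -- inverse of unimod B
  have huBinv : (unimod (F * Ci⁻¹ * Fᵀ))⁻¹ = s⁻¹ • (Fᵀ⁻¹ * Ci * F⁻¹) := by
    rw [huB]; apply inv_eq_right_inv
    rw [smul_mul_assoc, mul_smul_comm, smul_smul, mul_inv_cancel₀ hsne, one_smul]
    calc F * Ci⁻¹ * Fᵀ * (Fᵀ⁻¹ * Ci * F⁻¹)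
        = F * (Ci⁻¹ * ((Fᵀ * Fᵀ⁻¹) * Ci)) * F⁻¹ := by noncomm_ring
      _ = 1 := by rw [hFT, one_mul, hCiCi, mul_one, hFF]
  -- trace identities
  have htr1 : (Fᵀ * F * Ci⁻¹).trace = (F * Ci⁻¹ * Fᵀ).trace := by
    rw [mul_assoc, trace_mul_comm, mul_assoc]
  have htr2 : (Ci * F⁻¹ * Fᵀ⁻¹).trace = (Fᵀ⁻¹ * Ci * F⁻¹).trace := by
    rw [trace_mul_comm, ← mul_assoc]
  rw [huCinv, huBinv, huB, huC, hCinv, dev, dev, dev]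
  have push : ∀ X : Mat, F * (F⁻¹ * Fᵀ⁻¹ * X) * Fᵀ = Fᵀ⁻¹ * X * Fᵀ := by
    intro X; rw [← mul_assoc F, ← mul_assoc F, hFF, one_mul]
  have k1 : Fᵀ⁻¹ * (Fᵀ * F * Ci⁻¹) * Fᵀ = F * Ci⁻¹ * Fᵀ := by
    calc Fᵀ⁻¹ * (Fᵀ * F * Ci⁻¹) * Fᵀ = (Fᵀ⁻¹ * Fᵀ) * (F * Ci⁻¹ * Fᵀ) := by noncomm_ring
      _ = F * Ci⁻¹ * Fᵀ := by rw [hFTi, one_mul]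
  have k2 : Fᵀ⁻¹ * (Ci * (F⁻¹ * Fᵀ⁻¹)) * Fᵀ = Fᵀ⁻¹ * Ci * F⁻¹ := by
    calc Fᵀ⁻¹ * (Ci * (F⁻¹ * Fᵀ⁻¹)) * Fᵀ = (Fᵀ⁻¹ * Ci * F⁻¹) * (Fᵀ⁻¹ * Fᵀ) := by noncomm_ring
      _ = Fᵀ⁻¹ * Ci * F⁻¹ := by rw [hFTi, mul_one]
  rw [push]
  simp only [mul_sub, sub_mul, mul_smul_comm, smul_mul_assoc, smul_sub, smul_smul,
    trace_sub, trace_smul, smul_eq_mul, mul_one, one_mul, mul_assoc]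
  simp only [← mul_assoc, hFTi, one_mul, mul_one, htr1, htr2]
  module
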